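/- arXiv:1901.05702 — 7 statements merged into one kernel-verified Lean document; each statement's English description precedes it below -/
import Mathlib

section
/- Every symmetric F-bilinear map C₀(-q) × C₀(-q) → C₀(-q) can be written in the form F_{abc}(x,y) = a·x·y + b·(x̄·y + x·ȳ) + c·(x·y)‾ for some triple (a,b,c) ∈ C₀(-q)³, where products are Clifford products and z̄ denotes Clifford conjugation. -/
set_option maxHeartbeats 1000000


/-- let `A` be a model of the even Clifford algebra `C₀(-q)`:
a commutative algebra with basis `{1, τ}` where `τ = v₁·v₂`, `τ² = -β`,
and conjugation determined by `conj τ = -τ`.  Every symmetric `𝕜`-bilinear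
map `G : A × A → A` is of the form
`F_{abc}(x,y) = a·x·y + b·(x̄·y + x·ȳ) + c·(x·y)‾` for some `a, b, c ∈ A`. -/
theorem stmt_7 (𝕜 A : Type*) [Field 𝕜] (h2 : (2 : 𝕜) ≠ 0) (h3 : (3 : 𝕜) ≠ 0)
    [CommRing A] [Algebra 𝕜 A]
    (τ : A) (β : 𝕜) (hβ : β ≠ 0) (hτ : τ * τ = algebraMap 𝕜 A (-β))
    (bA : Module.Basis (Fin 2) 𝕜 A) (hb0 : bA 0 = 1) (hb1 : bA 1 = τ)
    (conj : A ≃ₐ[𝕜] A) (hconjτ : conj τ = -τ)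
    (G : A →ₗ[𝕜] A →ₗ[𝕜] A) (hG : ∀ x y, G x y = G y x) :
    ∃ a b c : A, ∀ x y : A,
      G x y = a * x * y + b * (conj x * y + x * conj y) + c * conj (x * y) := by
  set e2 : A := algebraMap 𝕜 A (2⁻¹) with he2
  set eβ : A := algebraMap 𝕜 A (β⁻¹) with heβ
  set g0 : A := G 1 1 with hg0
  set g1 : A := G 1 τ with hg1
  set g2 : A := G τ τ with hg2
  have ha2 : e2 * 2 = (1 : A) := by
    have h : (2 : A) = algebraMap 𝕜 A 2 := (map_ofNat _ 2).symm
    rw [he2, h, ← map_mul, inv_mul_cancel₀ h2, map_one]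
  have hβτ : eβ * (τ * τ) = (-1 : A) := by
    have h : β⁻¹ * (-β) = (-1 : 𝕜) := by field_simp
    rw [hτ, heβ, ← map_mul, h, map_neg, map_one]
  set d : A := -(eβ * τ * g1) with hd
  set u : A := -(eβ * g2) with hu
  set a : A := e2 * e2 * (g0 + u) + e2 * d with ha
  set b : A := e2 * e2 * (g0 - u) with hb
  set c : A := e2 * e2 * (g0 + u) - e2 * d with hc
  refine ⟨a, b, c, ?_⟩
  set L : A →ₗ[𝕜] A →ₗ[𝕜] A := LinearMap.mk₂ 𝕜
      (fun x y => a * x * y + b * (conj x * y + x * conj y) + c * conj (x * y))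
      (fun x x' y => by simp only [map_mul, map_add, add_mul, mul_add]; ring)
      (fun r x y => by simp only [map_mul, map_smul, Algebra.smul_def, AlgEquiv.commutes]; ring)
      (fun x y y' => by simp only [map_mul, map_add, add_mul, mul_add]; ring)
      (fun r x y => by simp only [map_mul, map_smul, Algebra.smul_def, AlgEquiv.commutes]; ring)
    with hL
  have key : G = L := by
    refine bA.ext fun i => bA.ext fun j => ?_
    fin_cases i <;> fin_cases j <;>
      simp only [Fin.zero_eta, Fin.mk_one, hb0, hb1, hL, LinearMap.mk₂_apply, map_one, map_mul, hconjτ]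
    · -- (1,1)
      linear_combination (-(g0) * (1 + 2 * e2)) * ha2
    · -- (1,τ)
      linear_combination 2 * e2 * g1 * hβτ - g1 * ha2
    · -- (τ,1)
      rw [hG τ 1]
      linear_combination -hg1 + 2 * e2 * g1 * hβτ - g1 * ha2
    · -- (τ,τ)
      linear_combination (4 * e2 * e2 * g2) * hβτ - (g2 * (1 + 2 * e2)) * ha2
  intro x y
  rw [key]
  simp [hL]
end

section
/- Two maps F_{ac} and F_{a'c'} (with F_{ac}(x,y) = a·x·y + c·(x·y)‾, N(c) - N(a) = 1 = N(c') - N(a')) are isomorphic under the isometry group of (C₀(-q), N) if and only if there exists λ ∈ C₀(-q) with N(λ) = 1 such that either (a',c') = (λ⁻¹a, λ³c) or (a',c') = (λ⁻¹ā, λ³c̄). -/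
/-- in the model `A` of `C₀(-q)`, two maps
`F_{ac}(x,y) = a·x·y + c·(x·y)‾` and `F_{a'c'}` with
`N(c) - N(a) = 1 = N(c') - N(a')` are isomorphic under the isometry group of
`(A, N)` (linear bijections preserving the norm `N x = x·x̄`) if and only if
there is `λ` with `N(λ) = 1` and `(a',c') = (λ⁻¹a, λ³c)` or
`(a',c') = (λ⁻¹ā, λ³c̄)` (note `λ⁻¹ = λ̄`). -/
theorem stmt_9 (𝕜 A : Type*) [Field 𝕜] (h2 : (2 : 𝕜) ≠ 0) (h3 : (3 : 𝕜) ≠ 0)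
    [CommRing A] [Algebra 𝕜 A]
    (τ : A) (β : 𝕜) (hβ : β ≠ 0) (hτ : τ * τ = algebraMap 𝕜 A (-β))
    (bA : Module.Basis (Fin 2) 𝕜 A) (hb0 : bA 0 = 1) (hb1 : bA 1 = τ)
    (conj : A ≃ₐ[𝕜] A) (hconjτ : conj τ = -τ)
    (a c a' c' : A)
    (hac : c * conj c - a * conj a = 1)
    (hac' : c' * conj c' - a' * conj a' = 1) :
    (∃ u : A ≃ₗ[𝕜] A, (∀ x : A, u x * conj (u x) = x * conj x) ∧
        ∀ x y : A, u (a * x * y + c * conj (x * y))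
          = a' * u x * u y + c' * conj (u x * u y)) ↔
      ∃ l : A, l * conj l = 1 ∧
        ((a' = conj l * a ∧ c' = l ^ 3 * c) ∨
         (a' = conj l * conj a ∧ c' = l ^ 3 * conj c)) := by
  -- basic structure facts
  have hA1 : (1 : A) ≠ 0 := by rw [← hb0]; exact bA.ne_zero 0
  haveI : Nontrivial A := nontrivial_of_ne 1 0 hA1
  have hτ' : τ * τ = -(algebraMap 𝕜 A β) := by rw [hτ, map_neg]
  have hdec : ∀ x : A, x = bA.repr x 0 • (1 : A) + bA.repr x 1 • τ := by
    intro x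
    conv_lhs => rw [← bA.sum_repr x]
    rw [Fin.sum_univ_two, hb0, hb1]
  have hconj : ∀ x : A, conj x = bA.repr x 0 • (1 : A) - bA.repr x 1 • τ := by
    intro x
    conv_lhs => rw [hdec x]
    rw [map_add, map_smul, map_smul, map_one, hconjτ, smul_neg, ← sub_eq_add_neg]
  have hcc : ∀ x : A, conj (conj x) = x := by
    intro x
    conv_lhs => rw [hconj x]
    rw [map_sub, map_smul, map_smul, map_one, hconjτ, smul_neg, sub_neg_eq_add, ← hdec]
  -- cancellation by τ, by 2
  have htinv : τ * ((-β⁻¹) • τ) = 1 := by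
    rw [mul_smul_comm, hτ, Algebra.smul_def, ← map_mul,
      show (-β⁻¹) * (-β) = 1 by field_simp, map_one]
  have cancelτ : ∀ y z : A, y * τ = z * τ → y = z := by
    intro y z h
    calc y = y * (τ * ((-β⁻¹) • τ)) := by rw [htinv, mul_one]
      _ = (y * τ) * ((-β⁻¹) • τ) := by ring
      _ = (z * τ) * ((-β⁻¹) • τ) := by rw [h]
      _ = z := by rw [mul_assoc, htinv, mul_one]
  have hhalf : algebraMap 𝕜 A 2⁻¹ * 2 = 1 := by
    rw [show ((2 : A)) = algebraMap 𝕜 A 2 from (map_ofNat (algebraMap 𝕜 A) 2).symm,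
      ← map_mul, inv_mul_cancel₀ h2, map_one]
  have cancel2 : ∀ y z : A, y * 2 = z * 2 → y = z := by
    intro y z h
    calc y = y * 2 * algebraMap 𝕜 A 2⁻¹ := by
            rw [mul_assoc, mul_comm (2 : A), hhalf, mul_one]
      _ = z * 2 * algebraMap 𝕜 A 2⁻¹ := by rw [h]
      _ = z := by rw [mul_assoc, mul_comm (2 : A), hhalf, mul_one]
  constructor
  · rintro ⟨u, hN, hmul⟩
    have hp : u 1 * conj (u 1) = 1 := by
      have h := hN 1
      rwa [map_one conj, mul_one] at h
    have hq : u τ * conj (u τ) = algebraMap 𝕜 A β := by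
      have h := hN τ
      rw [hconjτ] at h
      rw [h]; linear_combination -hτ'
    have hcross : u 1 * conj (u τ) + u τ * conj (u 1) = 0 := by
      have h := hN (1 + τ)
      rw [map_add, map_add, map_add conj 1 τ, map_one conj, hconjτ] at h
      linear_combination h - hp - hq - hτ'
    -- w = conj (u 1) * u τ is trace-zero of norm β, hence w = ± τ
    have hwdec := hdec (conj (u 1) * u τ)
    have hwconj := hconj (conj (u 1) * u τ)
    set s := bA.repr (conj (u 1) * u τ) 0 with hs
    set t := bA.repr (conj (u 1) * u τ) 1 with ht
    have htr0 : conj (u 1) * u τ + conj (conj (u 1) * u τ) = 0 := by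
      rw [map_mul, hcc]
      linear_combination hcross
    have hs0 : s = 0 := by
      have key : (s • (1 : A) + t • τ) + (s • (1 : A) - t • τ) = 0 := by
        rw [← hwdec, ← hwconj]; exact htr0
      have key2 : (2 * s) • (1 : A) = 0 := by
        rw [two_mul, add_smul]; linear_combination key
      have h0 : (2 * s : 𝕜) = 0 := by
        rcases smul_eq_zero.mp key2 with h | h
        · exact h
        · exact absurd h hA1
      rcases mul_eq_zero.mp h0 with h | h
      · exact absurd h h2
      · exact h
    have hw : conj (u 1) * u τ = t • τ := by
      rw [hs0, zero_smul, zero_add] at hwdec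
      exact hwdec
    have hwn : (conj (u 1) * u τ) * conj (conj (u 1) * u τ) = algebraMap 𝕜 A β := by
      rw [map_mul, hcc]
      linear_combination (u τ * conj (u τ)) * hp + hq
    have htt : t * t = 1 := by
      have h1 : (t • τ) * conj (t • τ) = algebraMap 𝕜 A β := by rw [← hw]; exact hwn
      rw [map_smul, hconjτ] at h1
      have h1' : algebraMap 𝕜 A (t * t * β) = algebraMap 𝕜 A β := by
        rw [← h1, smul_mul_smul_comm, mul_neg, hτ', neg_neg, Algebra.smul_def,
          ← map_mul (algebraMap 𝕜 A) (t*t) β]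
      have h1'' := (algebraMap 𝕜 A).injective h1'
      exact mul_right_cancel₀ hβ (by rw [h1'', one_mul])
    have ht1 : t = 1 ∨ t = -1 := by
      rcases mul_eq_zero.mp (show (t - 1) * (t + 1) = 0 by linear_combination htt) with h | h
      · exact Or.inl (sub_eq_zero.mp h)
      · exact Or.inr (eq_neg_of_add_eq_zero_left h)
    rcases ht1 with ht1 | ht1
    · -- u x = u 1 * x
      rw [ht1, one_smul] at hw
      have hq1 : u τ = u 1 * τ := by
        linear_combination u 1 * hw - u τ * hp
      have hu : ∀ x : A, u x = u 1 * x := by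
        intro x
        conv_lhs => rw [hdec x]
        rw [map_add, map_smul, map_smul, hq1]
        conv_rhs => rw [hdec x]
        rw [mul_add, mul_smul_comm, mul_smul_comm, mul_one]
      have E1 : u 1 * (a + c) = a' * (u 1 * u 1) + c' * (conj (u 1) * conj (u 1)) := by
        have h := hmul 1 1
        rw [hu] at h
        simp only [mul_one, one_mul, map_one, map_mul] at h
        linear_combination h
      have E2 : u 1 * a - u 1 * c = a' * (u 1 * u 1) - c' * (conj (u 1) * conj (u 1)) := by
        have h := hmul 1 τ
        rw [hu] at h
        rw [hq1] at h
        simp only [one_mul, map_mul, map_one, hconjτ, mul_neg, neg_mul, map_neg, neg_neg] at h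
        refine cancelτ _ _ ?_
        linear_combination h
      have hEa : u 1 * a = a' * (u 1 * u 1) :=
        cancel2 _ _ (by linear_combination E1 + E2)
      have hEc : u 1 * c = c' * (conj (u 1) * conj (u 1)) :=
        cancel2 _ _ (by linear_combination E1 - E2)
      refine ⟨u 1, hp, Or.inl ⟨?_, ?_⟩⟩
      · linear_combination (-(conj (u 1) * conj (u 1))) * hEa +
          (conj (u 1) * a - a' * (u 1 * conj (u 1) + 1)) * hp
      · linear_combination (-(u 1 * u 1)) * hEc + (-(c' * (u 1 * conj (u 1) + 1))) * hp
    · -- u x = u 1 * conj x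
      rw [ht1, neg_smul, one_smul] at hw
      have hq1 : u τ = -(u 1 * τ) := by
        linear_combination u 1 * hw - u τ * hp
      have hu : ∀ x : A, u x = u 1 * conj x := by
        intro x
        conv_lhs => rw [hdec x]
        rw [map_add, map_smul, map_smul, hq1, hconj x]
        rw [mul_sub, mul_smul_comm, mul_smul_comm, mul_one, smul_neg, ← sub_eq_add_neg]
      have E1 : u 1 * (conj a + conj c) = a' * (u 1 * u 1) + c' * (conj (u 1) * conj (u 1)) := by
        have h := hmul 1 1
        rw [hu] at h
        simp only [mul_one, one_mul, map_one, map_add, map_mul, hcc] at h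
        linear_combination h
      have E2 : u 1 * conj c - u 1 * conj a
          = c' * (conj (u 1) * conj (u 1)) - a' * (u 1 * u 1) := by
        have h := hmul 1 τ
        rw [hu] at h
        rw [hq1] at h
        simp only [one_mul, map_one, map_add, map_mul, hconjτ, hcc, mul_neg, neg_mul,
          map_neg, neg_neg, mul_one] at h
        refine cancelτ _ _ ?_
        linear_combination h
      have hEa : u 1 * conj a = a' * (u 1 * u 1) :=
        cancel2 _ _ (by linear_combination E1 - E2)
      have hEc : u 1 * conj c = c' * (conj (u 1) * conj (u 1)) :=
        cancel2 _ _ (by linear_combination E1 + E2)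
      refine ⟨u 1, hp, Or.inr ⟨?_, ?_⟩⟩
      · linear_combination (-(conj (u 1) * conj (u 1))) * hEa +
          (conj (u 1) * conj a - a' * (u 1 * conj (u 1) + 1)) * hp
      · linear_combination (-(u 1 * u 1)) * hEc + (-(c' * (u 1 * conj (u 1) + 1))) * hp
  · rintro ⟨l, hl, hcase⟩
    rcases hcase with ⟨ha, hc⟩ | ⟨ha, hc⟩
    · subst ha; subst hc
      refine ⟨{ toFun := fun x => l * x,
                map_add' := fun x y => mul_add l x y,
                map_smul' := fun sc x => mul_smul_comm sc l x,
                invFun := fun x => conj l * x,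
                left_inv := fun x => by
                  show conj l * (l * x) = x
                  rw [← mul_assoc, show conj l * l = 1 by linear_combination hl, one_mul],
                right_inv := fun x => by
                  show l * (conj l * x) = x
                  rw [← mul_assoc, hl, one_mul] }, ?_, ?_⟩
      · intro x
        show (l * x) * conj (l * x) = x * conj x
        rw [map_mul]
        linear_combination (x * conj x) * hl
      · intro x y
        show l * (a * x * y + c * conj (x * y))
          = (conj l * a) * (l * x) * (l * y) + (l ^ 3 * c) * conj ((l * x) * (l * y))
        simp only [map_mul]
        linear_combination (-(a * x * y * l) - c * conj x * conj y * l * (1 + l * conj l)) * hl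
    · subst ha; subst hc
      refine ⟨{ toFun := fun x => l * conj x,
                map_add' := fun x y => by
                  show l * conj (x + y) = l * conj x + l * conj y
                  rw [map_add, mul_add],
                map_smul' := fun sc x => by
                  show l * conj (sc • x) = sc • (l * conj x)
                  rw [map_smul]
                  exact mul_smul_comm sc l (conj x),
                invFun := fun x => l * conj x,
                left_inv := fun x => by
                  show l * conj (l * conj x) = x
                  rw [map_mul, hcc, ← mul_assoc, hl, one_mul],
                right_inv := fun x => by
                  show l * conj (l * conj x) = x
                  rw [map_mul, hcc, ← mul_assoc, hl, one_mul] }, ?_, ?_⟩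
      · intro x
        show (l * conj x) * conj (l * conj x) = x * conj x
        rw [map_mul, hcc]
        linear_combination (x * conj x) * hl
      · intro x y
        show l * conj (a * x * y + c * conj (x * y))
          = (conj l * conj a) * (l * conj x) * (l * conj y)
            + (l ^ 3 * conj c) * conj ((l * conj x) * (l * conj y))
        simp only [map_add, map_mul, hcc]
        linear_combination (-(conj a * conj x * conj y * l)
          - conj c * x * y * l * (1 + l * conj l)) * hl
end

section
/- Let F_{ac}(x,y) = a·x·y + c·(x·y)‾ on C₀(-q) with N(c) - N(a) = 1. If N(a) ≠ 0 and c·a³ ∉ F·1, then the isotropy subgroup of F_{ac} inside the isometry group of N is trivial. -/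
/-- in the model `A` of `C₀(-q)`, let
`F_{ac}(x,y) = a·x·y + c·(x·y)‾` with `N(c) - N(a) = 1`.  If `N(a) ≠ 0` and
`c·a³ ∉ 𝕜·1`, then the isotropy subgroup of `F_{ac}` inside the isometry group
of `N` is trivial: a norm-preserving linear bijection `u` intertwining
`F_{ac}` with itself is the identity, and conversely. -/
theorem stmt_12 (𝕜 A : Type*) [Field 𝕜] (h2 : (2 : 𝕜) ≠ 0) (h3 : (3 : 𝕜) ≠ 0)
    [CommRing A] [Algebra 𝕜 A]
    (τ : A) (β : 𝕜) (hβ : β ≠ 0) (hτ : τ * τ = algebraMap 𝕜 A (-β))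
    (bA : Module.Basis (Fin 2) 𝕜 A) (hb0 : bA 0 = 1) (hb1 : bA 1 = τ)
    (conj : A ≃ₐ[𝕜] A) (hconjτ : conj τ = -τ)
    (a c : A) (hac : c * conj c - a * conj a = 1)
    (hNa : a * conj a ≠ 0)
    (hca : ∀ t : 𝕜, c * a ^ 3 ≠ algebraMap 𝕜 A t)
    (u : A ≃ₗ[𝕜] A) :
    ((∀ x : A, u x * conj (u x) = x * conj x) ∧
      (∀ x y : A, u (a * x * y + c * conj (x * y))
        = a * u x * u y + c * conj (u x * u y))) ↔
      u = LinearEquiv.refl 𝕜 A := by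
  have hβ' : (-β) ≠ 0 := neg_ne_zero.mpr hβ
  -- coordinate lemmas
  have hcoord : ∀ p q : 𝕜, algebraMap 𝕜 A p + algebraMap 𝕜 A q * τ
      = p • bA 0 + q • bA 1 := by
    intro p q
    rw [hb0, hb1, Algebra.smul_def, Algebra.smul_def, mul_one]
  have h0 : ∀ p q : 𝕜, bA.repr (algebraMap 𝕜 A p + algebraMap 𝕜 A q * τ) 0 = p := by
    intro p q; rw [hcoord]; simp
  have h1 : ∀ p q : 𝕜, bA.repr (algebraMap 𝕜 A p + algebraMap 𝕜 A q * τ) 1 = q := by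
    intro p q; rw [hcoord]; simp
  have decomp : ∀ x : A, ∃ p q : 𝕜, x = algebraMap 𝕜 A p + algebraMap 𝕜 A q * τ := by
    intro x
    refine ⟨bA.repr x 0, bA.repr x 1, ?_⟩
    conv_lhs => rw [← bA.sum_repr x]
    rw [Fin.sum_univ_two, hcoord]
  have hkey : ∀ t : 𝕜, bA.repr (algebraMap 𝕜 A t) 0 = t := by
    intro t
    have e : algebraMap 𝕜 A t = algebraMap 𝕜 A t + algebraMap 𝕜 A 0 * τ := by simp
    rw [e, h0]
  have hιinj : ∀ t t' : 𝕜, algebraMap 𝕜 A t = algebraMap 𝕜 A t' → t = t' := by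
    intro t t' h
    rw [← hkey t, ← hkey t', h]
  -- conjugation lemmas
  have conjι : ∀ t : 𝕜, conj (algebraMap 𝕜 A t) = algebraMap 𝕜 A t := fun t =>
    conj.commutes t
  have conjd : ∀ p q : 𝕜, conj (algebraMap 𝕜 A p + algebraMap 𝕜 A q * τ)
      = algebraMap 𝕜 A p + algebraMap 𝕜 A (-q) * τ := by
    intro p q
    rw [map_add, map_mul, conjι, conjι, hconjτ, map_neg]
    ring
  have conj2 : ∀ x : A, conj (conj x) = x := by
    intro x
    obtain ⟨p, q, rfl⟩ := decomp x
    rw [conjd, conjd, neg_neg]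
  have fixlem : ∀ w : A, conj w = w → ∃ t : 𝕜, w = algebraMap 𝕜 A t := by
    intro w hw
    obtain ⟨p, q, rfl⟩ := decomp w
    rw [conjd] at hw
    have e1 := h1 p (-q)
    rw [hw, h1 p q] at e1
    have hq0 : q = 0 := by
      have h2q : 2 * q = 0 := by linear_combination e1
      rcases mul_eq_zero.mp h2q with h | h
      · exact absurd h h2
      · exact h
    exact ⟨p, by rw [hq0, map_zero, zero_mul, add_zero]⟩
  have antifix : ∀ w : A, conj w = -w → ∃ s : 𝕜, w = algebraMap 𝕜 A s * τ := by
    intro w hw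
    obtain ⟨p, q, rfl⟩ := decomp w
    rw [conjd] at hw
    have hneg : -(algebraMap 𝕜 A p + algebraMap 𝕜 A q * τ)
        = algebraMap 𝕜 A (-p) + algebraMap 𝕜 A (-q) * τ := by
      rw [map_neg, map_neg]; ring
    rw [hneg] at hw
    have e1 := h0 p (-q)
    rw [hw, h0 (-p) (-q)] at e1
    have hp0 : p = 0 := by
      have h2p : 2 * p = 0 := by linear_combination -e1
      rcases mul_eq_zero.mp h2p with h | h
      · exact absurd h h2
      · exact h
    exact ⟨q, by rw [hp0, map_zero, zero_add]⟩
  -- cancellation lemmas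
  have hτu : τ * (algebraMap 𝕜 A (-β)⁻¹ * τ) = 1 := by
    have e : τ * (algebraMap 𝕜 A (-β)⁻¹ * τ) = algebraMap 𝕜 A (-β)⁻¹ * (τ * τ) := by
      ring
    rw [e, hτ, ← map_mul, inv_mul_cancel₀ hβ', map_one]
  have cancelτ : ∀ x y : A, x * τ = y * τ → x = y := by
    intro x y h
    calc x = x * (τ * (algebraMap 𝕜 A (-β)⁻¹ * τ)) := by rw [hτu, mul_one]
    _ = (x * τ) * (algebraMap 𝕜 A (-β)⁻¹ * τ) := by ring
    _ = (y * τ) * (algebraMap 𝕜 A (-β)⁻¹ * τ) := by rw [h]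
    _ = y * (τ * (algebraMap 𝕜 A (-β)⁻¹ * τ)) := by ring
    _ = y := by rw [hτu, mul_one]
  have h2x : ∀ x : A, algebraMap 𝕜 A (2 : 𝕜) * x = x + x := by
    intro x
    rw [show (2 : 𝕜) = 1 + 1 by norm_num, map_add, map_one]
    ring
  have cancel2 : ∀ x y : A, x + x = y + y → x = y := by
    intro x y h
    rw [← h2x, ← h2x] at h
    calc x = algebraMap 𝕜 A ((2 : 𝕜)⁻¹ * 2) * x := by
          rw [inv_mul_cancel₀ h2, map_one, one_mul]
    _ = algebraMap 𝕜 A (2 : 𝕜)⁻¹ * (algebraMap 𝕜 A (2 : 𝕜) * x) := by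
          rw [map_mul]; ring
    _ = algebraMap 𝕜 A (2 : 𝕜)⁻¹ * (algebraMap 𝕜 A (2 : 𝕜) * y) := by rw [h]
    _ = algebraMap 𝕜 A ((2 : 𝕜)⁻¹ * 2) * y := by rw [map_mul]; ring
    _ = y := by rw [inv_mul_cancel₀ h2, map_one, one_mul]
  constructor
  · rintro ⟨hN, hF⟩
    have hNl : u 1 * conj (u 1) = 1 := by simpa using hN 1
    have hNm : u τ * conj (u τ) = algebraMap 𝕜 A β := by
      have h := hN τ
      rw [hconjτ, mul_neg, hτ, map_neg, neg_neg] at h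
      exact h
    have hB : u 1 * conj (u τ) + u τ * conj (u 1) = 0 := by
      have h := hN (1 + τ)
      simp only [map_add, map_one, hconjτ] at h
      have hr : ((1 : A) + τ) * (1 + -τ) = 1 + algebraMap 𝕜 A β := by
        have e : ((1 : A) + τ) * (1 + -τ) = 1 - τ * τ := by ring
        rw [e, hτ, map_neg]
        ring
      rw [hr] at h
      linear_combination h - hNl - hNm
    have hanti : conj (u 1 * conj (u τ)) = -(u 1 * conj (u τ)) := by
      rw [map_mul, conj2]
      linear_combination hB
    obtain ⟨s, hs⟩ := antifix _ hanti
    have hs2 : s * s = 1 := by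
      have hw : (u 1 * conj (u τ)) * conj (u 1 * conj (u τ)) = algebraMap 𝕜 A β := by
        rw [map_mul, conj2]
        linear_combination (conj (u τ) * u τ) * hNl + hNm
      have hw2 : (algebraMap 𝕜 A s * τ) * conj (algebraMap 𝕜 A s * τ)
          = algebraMap 𝕜 A (s * s * β) := by
        rw [map_mul, conjι, hconjτ]
        have e : algebraMap 𝕜 A s * τ * (algebraMap 𝕜 A s * -τ)
            = -(algebraMap 𝕜 A s * algebraMap 𝕜 A s * (τ * τ)) := by ring
        rw [e, hτ, ← map_mul, ← map_mul, ← map_neg]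
        congr 1
        ring
      rw [hs, hw2] at hw
      have := hιinj _ _ hw
      exact mul_right_cancel₀ hβ (by rw [this, one_mul])
    have hsor : s = 1 ∨ s = -1 := by
      have e : (s - 1) * (s + 1) = 0 := by linear_combination hs2
      rcases mul_eq_zero.mp e with h | h
      · exact Or.inl (by linear_combination h)
      · exact Or.inr (by linear_combination h)
    have hm : u τ = -(algebraMap 𝕜 A s * u 1 * τ) := by
      have h1' : conj (u τ) = conj (u 1) * (algebraMap 𝕜 A s * τ) := by
        calc conj (u τ) = (u 1 * conj (u 1)) * conj (u τ) := by rw [hNl, one_mul]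
        _ = conj (u 1) * (u 1 * conj (u τ)) := by ring
        _ = conj (u 1) * (algebraMap 𝕜 A s * τ) := by rw [hs]
      have h2' := congrArg conj h1'
      rw [conj2, map_mul, map_mul, conj2, conjι, hconjτ] at h2'
      rw [h2']; ring
    have hu : ∀ p q : 𝕜, u (algebraMap 𝕜 A p + algebraMap 𝕜 A q * τ)
        = algebraMap 𝕜 A p * u 1 + algebraMap 𝕜 A q * u τ := by
      intro p q
      rw [hcoord p q, map_add, map_smul, map_smul, hb0, hb1, Algebra.smul_def,
        Algebra.smul_def]
    rcases hsor with rfl | rfl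
    · -- s = 1 : u x = (u 1) * conj x, leads to contradiction
      exfalso
      have hm' : u τ = -(u 1 * τ) := by rw [hm, map_one, one_mul]
      have huall : ∀ x : A, u x = u 1 * conj x := by
        intro x
        obtain ⟨p, q, rfl⟩ := decomp x
        rw [hu, hm', conjd, map_neg]
        ring
      have h := hF 1 1
      rw [huall (a * 1 * 1 + c * conj (1 * 1))] at h
      simp only [one_mul, mul_one, map_one, map_add, map_mul] at h
      have hh2 := hF 1 τ
      rw [huall (a * 1 * τ + c * conj (1 * τ)), hm'] at hh2
      simp only [one_mul, mul_one, map_one, map_add, map_mul, map_neg, hconjτ,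
        mul_neg, neg_mul, neg_neg] at hh2
      have h2'' : (u 1 * (-conj a + conj c)) * τ
          = (-(a * u 1 * u 1) + c * (conj (u 1) * conj (u 1))) * τ := by
        linear_combination hh2
      have h2' := cancelτ _ _ h2''
      have eA' : u 1 * conj a + u 1 * conj a = a * u 1 * u 1 + a * u 1 * u 1 := by
        linear_combination h - h2'
      have eA := cancel2 _ _ eA'
      have eC' : u 1 * conj c + u 1 * conj c
          = c * (conj (u 1) * conj (u 1)) + c * (conj (u 1) * conj (u 1)) := by
        linear_combination h + h2'
      have eC := cancel2 _ _ eC'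
      have hconja : conj a = a * u 1 := by
        linear_combination conj (u 1) * eA + (a * u 1 - conj a) * hNl
      have hconjc : conj c = c * conj (u 1) * conj (u 1) * conj (u 1) := by
        linear_combination conj (u 1) * eC + (-(conj c)) * hNl
      have hfix : conj (c * a ^ 3) = c * a ^ 3 := by
        rw [map_mul, map_pow, hconja, hconjc]
        have e : c * conj (u 1) * conj (u 1) * conj (u 1) * (a * u 1) ^ 3
            = c * a ^ 3 * (u 1 * conj (u 1)) ^ 3 := by ring
        rw [e, hNl, one_pow, mul_one]
      obtain ⟨t, ht⟩ := fixlem _ hfix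
      exact hca t ht
    · -- s = -1 : u x = (u 1) * x, so u 1 = 1 and u = id
      have hm' : u τ = u 1 * τ := by rw [hm, map_neg, map_one]; ring
      have huall : ∀ x : A, u x = u 1 * x := by
        intro x
        obtain ⟨p, q, rfl⟩ := decomp x
        rw [hu, hm']
        ring
      have h := hF 1 1
      rw [huall (a * 1 * 1 + c * conj (1 * 1))] at h
      simp only [one_mul, mul_one, map_one, map_add, map_mul] at h
      have hh2 := hF 1 τ
      rw [huall (a * 1 * τ + c * conj (1 * τ)), hm'] at hh2
      simp only [one_mul, mul_one, map_one, map_add, map_mul, map_neg, hconjτ,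
        mul_neg, neg_mul, neg_neg] at hh2
      have h2'' : (u 1 * a - u 1 * c) * τ
          = (a * u 1 * u 1 - c * (conj (u 1) * conj (u 1))) * τ := by
        linear_combination hh2
      have h2' := cancelτ _ _ h2''
      have eA' : u 1 * a + u 1 * a = a * u 1 * u 1 + a * u 1 * u 1 := by
        linear_combination h + h2'
      have eA := cancel2 _ _ eA'
      have hfa : conj (a * conj a) = a * conj a := by
        rw [map_mul, conj2]; ring
      obtain ⟨t, hta⟩ := fixlem _ hfa
      have ht0 : t ≠ 0 := by
        intro h0'
        rw [h0', map_zero] at hta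
        exact hNa hta
      have hainv : a * (conj a * algebraMap 𝕜 A t⁻¹) = 1 := by
        rw [← mul_assoc, hta, ← map_mul, mul_inv_cancel₀ ht0, map_one]
      have e3 : u 1 = u 1 * u 1 := by
        calc u 1 = u 1 * (a * (conj a * algebraMap 𝕜 A t⁻¹)) := by rw [hainv, mul_one]
        _ = u 1 * a * (conj a * algebraMap 𝕜 A t⁻¹) := by ring
        _ = a * u 1 * u 1 * (conj a * algebraMap 𝕜 A t⁻¹) := by rw [eA]
        _ = u 1 * u 1 * (a * (conj a * algebraMap 𝕜 A t⁻¹)) := by ring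
        _ = u 1 * u 1 := by rw [hainv, mul_one]
      have hone : u 1 = 1 := by
        linear_combination (-(conj (u 1))) * e3 + (1 - u 1) * hNl
      refine LinearEquiv.ext fun x => ?_
      rw [huall x, hone, one_mul]
      rfl
  · rintro rfl
    constructor
    · intro x; rfl
    · intro x y; rfl
end

section
/- Let F_{ac}(x,y) = a·x·y + c·(x·y)‾ on C₀(-q) with N(c) - N(a) = 1. If N(a) ≠ 0 and c·a³ ∈ F·1, then the isotropy subgroup of F_{ac} in the isometry group of N is {id, ψ_{ā/a}}, where ψ_λ(x) = λx̄. -/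
/-- in the model `A` of `C₀(-q)`, let
`F_{ac}(x,y) = a·x·y + c·(x·y)‾` with `N(c) - N(a) = 1`.  If `N(a) ≠ 0` and
`c·a³ ∈ 𝕜·1`, then the isotropy subgroup of `F_{ac}` in the isometry group of
`N` is `{id, ψ_{ā/a}}`; since `a` is invertible (`a⁻¹ = ā/N(a)`), the map
`ψ_{ā/a}(x) = (ā/a)·x̄` is characterized by `a · u x = ā · x̄`. -/
theorem stmt_13 (𝕜 A : Type*) [Field 𝕜] (h2 : (2 : 𝕜) ≠ 0) (h3 : (3 : 𝕜) ≠ 0)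
    [CommRing A] [Algebra 𝕜 A]
    (τ : A) (β : 𝕜) (hβ : β ≠ 0) (hτ : τ * τ = algebraMap 𝕜 A (-β))
    (bA : Module.Basis (Fin 2) 𝕜 A) (hb0 : bA 0 = 1) (hb1 : bA 1 = τ)
    (conj : A ≃ₐ[𝕜] A) (hconjτ : conj τ = -τ)
    (a c : A) (hac : c * conj c - a * conj a = 1)
    (hNa : a * conj a ≠ 0)
    (hca : ∃ t : 𝕜, c * a ^ 3 = algebraMap 𝕜 A t)
    (u : A ≃ₗ[𝕜] A) :
    ((∀ x : A, u x * conj (u x) = x * conj x) ∧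
      (∀ x y : A, u (a * x * y + c * conj (x * y))
        = a * u x * u y + c * conj (u x * u y))) ↔
      (u = LinearEquiv.refl 𝕜 A ∨ ∀ x : A, a * u x = conj a * conj x) := by
  have hone : (1 : A) ≠ 0 := hb0 ▸ bA.ne_zero 0
  haveI : Nontrivial A := ⟨1, 0, hone⟩
  have hinj : Function.Injective (algebraMap 𝕜 A) := (algebraMap 𝕜 A).injective
  -- independence of 1, τ
  have indep : ∀ s t : 𝕜, algebraMap 𝕜 A s + algebraMap 𝕜 A t * τ = 0 → s = 0 ∧ t = 0 := by
    intro s t h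
    have hli := bA.linearIndependent
    rw [Fintype.linearIndependent_iff] at hli
    have h' : ∑ i, (![s, t]) i • bA i = 0 := by
      rw [Fin.sum_univ_two]
      simpa [hb0, hb1, Algebra.smul_def] using h
    exact ⟨hli ![s, t] h' 0, hli ![s, t] h' 1⟩
  have span : ∀ z : A, ∃ s t : 𝕜, z = algebraMap 𝕜 A s + algebraMap 𝕜 A t * τ := by
    intro z
    refine ⟨bA.repr z 0, bA.repr z 1, ?_⟩
    have h := bA.sum_repr z
    rw [Fin.sum_univ_two, hb0, hb1] at h
    calc z = bA.repr z 0 • (1 : A) + bA.repr z 1 • τ := h.symm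
      _ = algebraMap 𝕜 A (bA.repr z 0) + algebraMap 𝕜 A (bA.repr z 1) * τ := by
          simp [Algebra.smul_def]
  have hconj : ∀ s t : 𝕜, conj (algebraMap 𝕜 A s + algebraMap 𝕜 A t * τ)
      = algebraMap 𝕜 A s - algebraMap 𝕜 A t * τ := by
    intro s t
    rw [map_add, map_mul, hconjτ, AlgEquiv.commutes, AlgEquiv.commutes]
    ring
  have hcc : ∀ z : A, conj (conj z) = z := by
    intro z; obtain ⟨s, t, rfl⟩ := span z
    rw [hconj]
    have e : algebraMap 𝕜 A s - algebraMap 𝕜 A t * τ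
        = algebraMap 𝕜 A s + algebraMap 𝕜 A (-t) * τ := by rw [map_neg]; ring
    rw [e, hconj, map_neg]; ring
  have fix : ∀ z : A, conj z = z → ∃ s : 𝕜, z = algebraMap 𝕜 A s := by
    intro z hz; obtain ⟨s, t, rfl⟩ := span z
    rw [hconj] at hz
    have h0 : algebraMap 𝕜 A 0 + algebraMap 𝕜 A (2 * t) * τ = 0 := by
      rw [map_zero, map_mul, map_ofNat]
      linear_combination -hz
    have ht : t = 0 := by
      have := (indep _ _ h0).2
      exact (mul_eq_zero.mp this).resolve_left h2
    exact ⟨s, by rw [ht, map_zero]; ring⟩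
  have antifix : ∀ z : A, conj z = -z → ∃ t : 𝕜, z = algebraMap 𝕜 A t * τ := by
    intro z hz; obtain ⟨s, t, rfl⟩ := span z
    rw [hconj] at hz
    have h0 : algebraMap 𝕜 A (2 * s) + algebraMap 𝕜 A 0 * τ = 0 := by
      rw [map_zero, map_mul, map_ofNat]
      linear_combination hz
    have hs : s = 0 := by
      have := (indep _ _ h0).1
      exact (mul_eq_zero.mp this).resolve_left h2
    exact ⟨t, by rw [hs, map_zero]; ring⟩
  -- cancellation helper
  have cancel : ∀ w : A, (∃ w' : A, w * w' = 1) → ∀ z z' : A, w * z = w * z' → z = z' := by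
    rintro w ⟨w', hw⟩ z z' h
    calc z = w' * (w * z) := by rw [← mul_assoc, mul_comm w' w, hw, one_mul]
      _ = w' * (w * z') := by rw [h]
      _ = z' := by rw [← mul_assoc, mul_comm w' w, hw, one_mul]
  have hτinv : ∃ w' : A, τ * w' = 1 := by
    refine ⟨algebraMap 𝕜 A (-β⁻¹) * τ, ?_⟩
    rw [show τ * (algebraMap 𝕜 A (-β⁻¹) * τ) = algebraMap 𝕜 A (-β⁻¹) * (τ * τ) by ring, hτ,
      ← map_mul]
    rw [show (-β⁻¹) * (-β) = β⁻¹ * β by ring, inv_mul_cancel₀ hβ, map_one]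
  obtain ⟨s₀, hs₀⟩ := fix (a * conj a) (by rw [map_mul, hcc]; ring)
  have hs₀0 : s₀ ≠ 0 := fun h => hNa (by rw [hs₀, h, map_zero])
  have hainv : ∃ w' : A, a * w' = 1 := by
    refine ⟨algebraMap 𝕜 A s₀⁻¹ * conj a, ?_⟩
    rw [show a * (algebraMap 𝕜 A s₀⁻¹ * conj a) = algebraMap 𝕜 A s₀⁻¹ * (a * conj a) by ring,
      hs₀, ← map_mul, inv_mul_cancel₀ hs₀0, map_one]
  have hτ' : τ * τ = -algebraMap 𝕜 A β := by rw [hτ, map_neg]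
  have h2inv : ∃ w' : A, (2 : A) * w' = 1 := by
    refine ⟨algebraMap 𝕜 A 2⁻¹, ?_⟩
    rw [show ((2 : A)) = algebraMap 𝕜 A 2 by rw [map_ofNat], ← map_mul,
      mul_inv_cancel₀ h2, map_one]
  constructor
  · rintro ⟨hN, hF⟩
    have hB : ∀ x y : A, u x * conj (u y) + u y * conj (u x) = x * conj y + y * conj x := by
      intro x y
      have h := hN (x + y)
      simp only [map_add] at h
      linear_combination h - hN x - hN y
    obtain ⟨l, hl⟩ : ∃ l, u 1 = l := ⟨_, rfl⟩
    obtain ⟨m, hm⟩ : ∃ m, u τ = m := ⟨_, rfl⟩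
    have hNl : l * conj l = 1 := by
      have h := hN 1; rw [hl, map_one, mul_one] at h; exact h
    have hNm : m * conj m = algebraMap 𝕜 A β := by
      have h := hN τ; rw [hm, hconjτ] at h
      rw [h]; linear_combination -hτ' 
    have hBlm : l * conj m + m * conj l = 0 := by
      have h := hB 1 τ
      rw [hl, hm, map_one, hconjτ] at h
      linear_combination h
    obtain ⟨t, htm⟩ := antifix (m * conj l) (by
      rw [map_mul, hcc]
      linear_combination hBlm)
    have hm_eq : m = algebraMap 𝕜 A t * τ * l := by
      calc m = m * (l * conj l) := by rw [hNl, mul_one]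
        _ = (m * conj l) * l := by ring
        _ = algebraMap 𝕜 A t * τ * l := by rw [htm]
    have hconjm : conj m = algebraMap 𝕜 A t * (-τ) * conj l := by
      rw [hm_eq, map_mul, map_mul, hconjτ, AlgEquiv.commutes]
    have ht2 : (t - 1) * (t + 1) = 0 := by
      have e : algebraMap 𝕜 A ((t * t - 1) * β) = 0 := by
        rw [map_mul, map_sub, map_mul, map_one]
        have h := hNm
        rw [hconjm, hm_eq] at h
        linear_combination h + (algebraMap 𝕜 A t * algebraMap 𝕜 A t * (l * conj l)) * hτ'
          - (algebraMap 𝕜 A t * algebraMap 𝕜 A t * algebraMap 𝕜 A β) * hNl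
      have e2 : (t * t - 1) * β = 0 := by
        apply hinj; rw [e, map_zero]
      have e3 : t * t - 1 = 0 := by
        rcases mul_eq_zero.mp e2 with h | h
        · exact h
        · exact absurd h hβ
      linear_combination e3
    rcases mul_eq_zero.mp ht2 with htc | htc
    · -- t = 1 : u x = l * x, and l = 1
      have ht1 : t = 1 := by linear_combination htc
      have hm2 : m = τ * l := by rw [hm_eq, ht1, map_one, one_mul]
      have hux : ∀ x : A, u x = l * x := by
        intro x; obtain ⟨s, t', rfl⟩ := span x
        have e : (algebraMap 𝕜 A s + algebraMap 𝕜 A t' * τ) = s • (1 : A) + t' • τ := by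
          simp [Algebra.smul_def]
        rw [e, map_add, map_smul, map_smul, hl, hm, hm2]
        simp only [Algebra.smul_def]
        ring
      have eq1 : l * (a + c) = a * (l * l) + c * (conj l * conj l) := by
        have h := hF 1 1
        simp only [hux, map_mul, map_one, mul_one, one_mul] at h
        linear_combination h
      have eq2 : l * a - l * c = a * (l * l) - c * (conj l * conj l) := by
        have h := hF τ 1
        simp only [hux, map_mul, map_one, mul_one, one_mul, hconjτ] at h
        refine cancel τ hτinv _ _ ?_
        linear_combination h
      have eq3 : l = l * l := by
        refine cancel a hainv _ _ ?_
        refine cancel 2 h2inv _ _ ?_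
        linear_combination eq1 + eq2
      have hl1 : (1 : A) = l := by
        linear_combination conj l * eq3 + (l - 1) * hNl
      refine Or.inl (LinearEquiv.ext fun x => ?_)
      rw [hux, ← hl1, one_mul]; rfl
    · -- t = -1 : u x = l * conj x, and conj a = a * l
      have ht1 : t = -1 := by linear_combination htc
      have hm2 : m = -(τ * l) := by
        rw [hm_eq, ht1, map_neg, map_one]; ring
      have hux : ∀ x : A, u x = l * conj x := by
        intro x; obtain ⟨s, t', rfl⟩ := span x
        have e : (algebraMap 𝕜 A s + algebraMap 𝕜 A t' * τ) = s • (1 : A) + t' • τ := by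
          simp [Algebra.smul_def]
        rw [e, map_add, map_smul, map_smul, hl, hm, hm2, map_add, map_smul, map_smul,
          map_one, hconjτ]
        simp only [Algebra.smul_def]
        ring
      have eq1 : l * (conj a + conj c) = a * (l * l) + c * (conj l * conj l) := by
        have h := hF 1 1
        simp only [hux, map_mul, map_add, map_one, mul_one, one_mul] at h
        linear_combination h
      have eq2 : l * conj c - l * conj a = c * (conj l * conj l) - a * (l * l) := by
        have h := hF τ 1
        simp only [hux, map_mul, map_add, map_one, mul_one, one_mul, hconjτ, map_neg] at h
        refine cancel τ hτinv _ _ ?_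
        linear_combination h
      have eq3 : l * conj a = a * (l * l) := by
        refine cancel 2 h2inv _ _ ?_
        linear_combination eq1 - eq2
      have hal : conj a = a * l := by
        linear_combination conj l * eq3 + (a * l - conj a) * hNl
      refine Or.inr fun x => ?_
      rw [hux, hal]; ring
  · rintro (rfl | hu)
    · constructor
      · intro x; rfl
      · intro x y; rfl
    · have key : conj c * conj a ^ 3 = c * a ^ 3 := by
        obtain ⟨t', ht'⟩ := hca
        have h1 := congrArg conj ht'
        rw [map_mul, map_pow, AlgEquiv.commutes] at h1
        rw [h1, ht']
      obtain ⟨lam, hlam⟩ : ∃ lam : A, lam = algebraMap 𝕜 A s₀⁻¹ * (conj a * conj a) :=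
        ⟨_, rfl⟩
      have hconjlam : conj lam = algebraMap 𝕜 A s₀⁻¹ * (a * a) := by
        rw [hlam, map_mul, map_mul, AlgEquiv.commutes, hcc]
      have hl2 : algebraMap 𝕜 A s₀ * lam = conj a * conj a := by
        rw [hlam, ← mul_assoc, ← map_mul, mul_inv_cancel₀ hs₀0, map_one, one_mul]
      have hl3 : algebraMap 𝕜 A s₀ * conj lam = a * a := by
        rw [hconjlam, ← mul_assoc, ← map_mul, mul_inv_cancel₀ hs₀0, map_one, one_mul]
      have hsinv : ∃ w' : A, algebraMap 𝕜 A s₀ * w' = 1 :=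
        ⟨algebraMap 𝕜 A s₀⁻¹, by rw [← map_mul, mul_inv_cancel₀ hs₀0, map_one]⟩
      have hal : a * lam = conj a := by
        refine cancel (algebraMap 𝕜 A s₀) hsinv _ _ ?_
        calc algebraMap 𝕜 A s₀ * (a * lam) = a * (algebraMap 𝕜 A s₀ * lam) := by ring
          _ = a * (conj a * conj a) := by rw [hl2]
          _ = (a * conj a) * conj a := by ring
          _ = algebraMap 𝕜 A s₀ * conj a := by rw [hs₀]
      have hNlam : lam * conj lam = 1 := by
        refine cancel (algebraMap 𝕜 A (s₀ * s₀)) ⟨algebraMap 𝕜 A (s₀ * s₀)⁻¹, by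
          rw [← map_mul, mul_inv_cancel₀ (mul_ne_zero hs₀0 hs₀0), map_one]⟩ _ _ ?_
        calc algebraMap 𝕜 A (s₀ * s₀) * (lam * conj lam)
            = (algebraMap 𝕜 A s₀ * lam) * (algebraMap 𝕜 A s₀ * conj lam) := by
              rw [map_mul]; ring
          _ = (conj a * conj a) * (a * a) := by rw [hl2, hl3]
          _ = (a * conj a) * (a * conj a) := by ring
          _ = algebraMap 𝕜 A (s₀ * s₀) * 1 := by rw [hs₀, map_mul, mul_one]
      have hux : ∀ x : A, u x = lam * conj x := by
        intro x
        refine cancel a hainv _ _ ?_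
        rw [hu x, ← mul_assoc, hal]
      have hkey2 : lam * conj c = c * (conj lam * conj lam) := by
        refine cancel (algebraMap 𝕜 A (s₀ * (s₀ * s₀)))
          ⟨algebraMap 𝕜 A (s₀ * (s₀ * s₀))⁻¹, by
            rw [← map_mul, mul_inv_cancel₀ (mul_ne_zero hs₀0 (mul_ne_zero hs₀0 hs₀0)),
              map_one]⟩ _ _ ?_
        have e1 : algebraMap 𝕜 A (s₀ * (s₀ * s₀)) * (lam * conj c)
            = a ^ 5 * c * conj a := by
          calc algebraMap 𝕜 A (s₀ * (s₀ * s₀)) * (lam * conj c)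
              = (algebraMap 𝕜 A s₀ * algebraMap 𝕜 A s₀) * (algebraMap 𝕜 A s₀ * lam)
                * conj c := by rw [map_mul, map_mul]; ring
            _ = (algebraMap 𝕜 A s₀ * algebraMap 𝕜 A s₀) * (conj a * conj a) * conj c := by
                rw [hl2]
            _ = ((a * conj a) * (a * conj a)) * (conj a * conj a) * conj c := by rw [hs₀]
            _ = (a * a) * (conj c * conj a ^ 3) * conj a := by ring
            _ = (a * a) * (c * a ^ 3) * conj a := by rw [key]
            _ = a ^ 5 * c * conj a := by ring
        have e2 : algebraMap 𝕜 A (s₀ * (s₀ * s₀)) * (c * (conj lam * conj lam))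
            = a ^ 5 * c * conj a := by
          calc algebraMap 𝕜 A (s₀ * (s₀ * s₀)) * (c * (conj lam * conj lam))
              = algebraMap 𝕜 A s₀ * ((algebraMap 𝕜 A s₀ * conj lam)
                * (algebraMap 𝕜 A s₀ * conj lam)) * c := by rw [map_mul, map_mul]; ring
            _ = algebraMap 𝕜 A s₀ * ((a * a) * (a * a)) * c := by rw [hl3]
            _ = (a * conj a) * ((a * a) * (a * a)) * c := by rw [hs₀]
            _ = a ^ 5 * c * conj a := by ring
        rw [e1, e2]
      have hkey1 : lam * conj a = a * (lam * lam) := by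
        calc lam * conj a = lam * (a * lam) := by rw [hal]
          _ = a * (lam * lam) := by ring
      constructor
      · intro x
        rw [hux x, map_mul, hcc]
        linear_combination (x * conj x) * hNlam
      · intro x y
        simp only [hux, map_mul, map_add, hcc]
        linear_combination (conj x * conj y) * hkey1 + (x * y) * hkey2
end

section
/- The invariants J₁, J₂ of F_{ac} determine and are determined by the pair (N(a), K(a,c)): solving J₁ = 27(K + 2N(a)² + 3N(a))/D and J₂ = 27(K + 2N(a)²)/D with D = 4K + 8N(a)² + 36N(a) + 27 yields K = -27(6J₁² - 2J₂² - 27J₂)/(12J₁ - 8J₂ - 27)² and N(a) = 9(J₂ - J₁)/(12J₁ - 8J₂ - 27), whenever 12J₁ - 8J₂ - 27 ≠ 0. -/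
/-- the invariants `J₁, J₂` determine `(N(a), K)`: if
`J₁ = 27(K + 2n² + 3n)/D` and `J₂ = 27(K + 2n²)/D` with
`D = 4K + 8n² + 36n + 27 ≠ 0`, and `12J₁ - 8J₂ - 27 ≠ 0`, then
`K = -27(6J₁² - 2J₂² - 27J₂)/(12J₁ - 8J₂ - 27)²` and
`n = 9(J₂ - J₁)/(12J₁ - 8J₂ - 27)`. -/
theorem stmt_16 (𝕜 : Type*) [Field 𝕜] (h2 : (2 : 𝕜) ≠ 0) (h3 : (3 : 𝕜) ≠ 0)
    (K n J₁ J₂ : 𝕜)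
    (hD : 4 * K + 8 * n ^ 2 + 36 * n + 27 ≠ 0)
    (hJ1 : J₁ = 27 * (K + 2 * n ^ 2 + 3 * n) / (4 * K + 8 * n ^ 2 + 36 * n + 27))
    (hJ2 : J₂ = 27 * (K + 2 * n ^ 2) / (4 * K + 8 * n ^ 2 + 36 * n + 27))
    (hden : 12 * J₁ - 8 * J₂ - 27 ≠ 0) :
    K = -27 * (6 * J₁ ^ 2 - 2 * J₂ ^ 2 - 27 * J₂) / (12 * J₁ - 8 * J₂ - 27) ^ 2 ∧
    n = 9 * (J₂ - J₁) / (12 * J₁ - 8 * J₂ - 27) := by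
  rw [eq_div_iff hD] at hJ1 hJ2
  have hd : (12 * J₁ - 8 * J₂ - 27) * (4 * K + 8 * n ^ 2 + 36 * n + 27) = -729 := by
    linear_combination 12 * hJ1 - 8 * hJ2
  constructor
  · rw [eq_div_iff (pow_ne_zero _ hden)]
    have key : K * (12 * J₁ - 8 * J₂ - 27) ^ 2 * (4 * K + 8 * n ^ 2 + 36 * n + 27) ^ 2
        = -27 * (6 * J₁ ^ 2 - 2 * J₂ ^ 2 - 27 * J₂)
            * (4 * K + 8 * n ^ 2 + 36 * n + 27) ^ 2 := by
      linear_combination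
        K * ((12 * J₁ - 8 * J₂ - 27) * (4 * K + 8 * n ^ 2 + 36 * n + 27) - 729) * hd
        + 162 * (J₁ * (4 * K + 8 * n ^ 2 + 36 * n + 27) + 27 * (K + 2 * n ^ 2 + 3 * n)) * hJ1
        - 54 * (J₂ * (4 * K + 8 * n ^ 2 + 36 * n + 27) + 27 * (K + 2 * n ^ 2)) * hJ2
        - 729 * (4 * K + 8 * n ^ 2 + 36 * n + 27) * hJ2
    exact mul_right_cancel₀ (pow_ne_zero 2 hD) key
  · rw [eq_div_iff hden]
    have key : n * (12 * J₁ - 8 * J₂ - 27) * (4 * K + 8 * n ^ 2 + 36 * n + 27)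
        = 9 * (J₂ - J₁) * (4 * K + 8 * n ^ 2 + 36 * n + 27) := by
      linear_combination n * hd + 9 * hJ2 - 9 * hJ1 + 18 * hJ1 - 18 * hJ2
    exact mul_right_cancel₀ hD key
end

section
/- Let F_{ac}, F_{a'c'} be maps on C₀(-q) with N(c) - N(a) = 1 = N(c') - N(a') and a = 0. If N(a') = N(a) and K(a',c') = K(a,c), then a' = 0, and F_{ac} is equivalent to F_{a'c'} under the isometry group of N if and only if c'/c or c'/c̄ is a cube in C₀(-q). -/
section Aux

variable {𝕜 A : Type*} [Field 𝕜] [CommRing A] [Algebra 𝕜 A]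

lemma aux_coords (τ : A) (bA : Module.Basis (Fin 2) 𝕜 A) (hb0 : bA 0 = 1) (hb1 : bA 1 = τ)
    (s : A) : ∃ x y : 𝕜, s = algebraMap 𝕜 A x + algebraMap 𝕜 A y * τ := by
  refine ⟨bA.repr s 0, bA.repr s 1, ?_⟩
  have h := bA.sum_repr s
  rw [Fin.sum_univ_two, hb0, hb1, Algebra.smul_def, Algebra.smul_def, mul_one] at h
  exact h.symm

lemma aux_sq (h2 : (2 : 𝕜) ≠ 0) (τ : A) (β : 𝕜) (hβ : β ≠ 0)
    (hτ : τ * τ = algebraMap 𝕜 A (-β))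
    (bA : Module.Basis (Fin 2) 𝕜 A) (hb0 : bA 0 = 1) (hb1 : bA 1 = τ)
    (s : A) (hs : s ^ 2 = 0) : s = 0 := by
  rw [map_neg] at hτ
  obtain ⟨x, y, hxy⟩ := aux_coords τ bA hb0 hb1 s
  have hsq : (x ^ 2 - β * y ^ 2) • bA 0 + (2 * x * y) • bA 1 = 0 := by
    rw [hb0, hb1, ← hs, hxy]
    simp only [Algebra.smul_def, map_sub, map_mul, map_pow, map_ofNat, map_neg, mul_one]
    linear_combination (-(algebraMap 𝕜 A y) ^ 2) * hτ
  have h0 : x ^ 2 - β * y ^ 2 = 0 := by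
    have := congrArg (fun v => bA.repr v 0) hsq
    simpa [Module.Basis.repr_self, Finsupp.single_apply] using this
  have h1 : 2 * x * y = 0 := by
    have := congrArg (fun v => bA.repr v 1) hsq
    simpa [Module.Basis.repr_self, Finsupp.single_apply] using this
  have hxy0 : x * y = 0 := by
    rcases mul_eq_zero.mp h1 with h | h
    · rcases mul_eq_zero.mp h with h | h
      · exact absurd h h2
      · rw [h]; ring
    · rw [h]; ring
  have hx0 : x = 0 ∧ y = 0 := by
    rcases mul_eq_zero.mp hxy0 with h | h
    · refine ⟨h, ?_⟩
      rw [h] at h0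
      have : β * y ^ 2 = 0 := by linear_combination -h0
      rcases mul_eq_zero.mp this with h' | h'
      · exact absurd h' hβ
      · exact pow_eq_zero_iff (n := 2) (by norm_num) |>.mp h'
    · refine ⟨?_, h⟩
      rw [h] at h0
      have : x ^ 2 = 0 := by linear_combination h0
      exact pow_eq_zero_iff (n := 2) (by norm_num) |>.mp this
  rw [hxy, hx0.1, hx0.2]
  simp

end Aux

/-- in the model `A` of `C₀(-q)`, for `F_{ac}`, `F_{a'c'}` with
`N(c) - N(a) = 1 = N(c') - N(a')` and `a = 0`: if `N(a') = N(a)` and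
`K(a',c') = K(a,c)` (with `K(a,c) = a³c + ā³c̄`), then `a' = 0`, and `F_{ac}`
is equivalent to `F_{a'c'}` under the isometry group of `N` (i.e.
`(a',c') = (λ⁻¹a, λ³c)` or `(λ⁻¹ā, λ³c̄)` for some `λ` of norm 1) if and only
if `c'/c` or `c'/c̄` is a cube in `A`. -/
theorem stmt_18 (𝕜 A : Type*) [Field 𝕜] (h2 : (2 : 𝕜) ≠ 0) (h3 : (3 : 𝕜) ≠ 0)
    [CommRing A] [Algebra 𝕜 A]
    (τ : A) (β : 𝕜) (hβ : β ≠ 0) (hτ : τ * τ = algebraMap 𝕜 A (-β))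
    (bA : Module.Basis (Fin 2) 𝕜 A) (hb0 : bA 0 = 1) (hb1 : bA 1 = τ)
    (conj : A ≃ₐ[𝕜] A) (hconjτ : conj τ = -τ)
    (a c a' c' : A)
    (hac : c * conj c - a * conj a = 1)
    (hac' : c' * conj c' - a' * conj a' = 1)
    (ha : a = 0)
    (hN : a' * conj a' = a * conj a)
    (hK : a' ^ 3 * c' + (conj a') ^ 3 * conj c' = a ^ 3 * c + (conj a) ^ 3 * conj c) :
    a' = 0 ∧
    ((∃ l : A, l * conj l = 1 ∧
        ((a' = conj l * a ∧ c' = l ^ 3 * c) ∨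
         (a' = conj l * conj a ∧ c' = l ^ 3 * conj c))) ↔
      ∃ z : A, c' = z ^ 3 * c ∨ c' = z ^ 3 * conj c) := by
  have hinv : ∀ w : A, conj (conj w) = w := by
    intro w
    obtain ⟨x, y, hxy⟩ := aux_coords τ bA hb0 hb1 w
    rw [hxy]
    simp [map_add, map_mul, hconjτ, AlgEquiv.commutes]
  have hN0 : a' * conj a' = 0 := by rw [hN, ha]; simp
  have hcc' : c' * conj c' = 1 := by linear_combination hac' + hN0
  have hcc : c * conj c = 1 := by
    rw [ha] at hac; simpa using hac
  have hK0 : a' ^ 3 * c' + (conj a') ^ 3 * conj c' = 0 := by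
    rw [hK, ha]; simp
  have h1 : a' ^ 3 * c' ^ 2 + (conj a') ^ 3 = 0 := by
    linear_combination c' * hK0 - (conj a') ^ 3 * hcc'
  have h2' : a' ^ 6 * c' ^ 2 = 0 := by
    linear_combination a' ^ 3 * h1 - a' ^ 2 * (conj a') ^ 2 * hN0
  have h6 : a' ^ 6 = 0 := by
    linear_combination (conj c') ^ 2 * h2' - a' ^ 6 * (c' * conj c' + 1) * hcc'
  have ha'3 : a' ^ 3 = 0 := by
    apply aux_sq h2 τ β hβ hτ bA hb0 hb1
    linear_combination h6
  have ha'2 : a' ^ 2 = 0 := by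
    apply aux_sq h2 τ β hβ hτ bA hb0 hb1
    linear_combination a' * ha'3
  have ha' : a' = 0 := by
    apply aux_sq h2 τ β hβ hτ bA hb0 hb1
    exact ha'2
  refine ⟨ha', ?_, ?_⟩
  · rintro ⟨l, hl, ⟨_, hc⟩ | ⟨_, hc⟩⟩
    · exact ⟨l, Or.inl hc⟩
    · exact ⟨l, Or.inr hc⟩
  · rintro ⟨z, hz | hz⟩
    · have hconjz : conj c' = (conj z) ^ 3 * conj c := by
        rw [hz]; simp [map_mul, map_pow]
      have hn : (z * conj z) ^ 3 = 1 := by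
        linear_combination hcc' - c' * hconjz - (conj z) ^ 3 * conj c * hz
          - z ^ 3 * (conj z) ^ 3 * hcc
      refine ⟨z ^ 2 * conj z, ?_, Or.inl ⟨by rw [ha', ha]; simp, ?_⟩⟩
      · rw [map_mul, map_pow, hinv]
        linear_combination hn
      · rw [hz]
        linear_combination (-(z ^ 3 * c)) * hn
    · have hconjz : conj c' = (conj z) ^ 3 * c := by
        rw [hz]; simp [map_mul, map_pow, hinv]
      have hn : (z * conj z) ^ 3 = 1 := by
        linear_combination hcc' - c' * hconjz - (conj z) ^ 3 * c * hz
          - z ^ 3 * (conj z) ^ 3 * hcc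
      refine ⟨z ^ 2 * conj z, ?_, Or.inr ⟨by rw [ha', ha]; simp, ?_⟩⟩
      · rw [map_mul, map_pow, hinv]
        linear_combination hn
      · rw [hz]
        linear_combination (-(z ^ 3 * conj c)) * hn
end

section
/- Let F_{ac}, F_{a'c'} be maps on C₀(-q) with N(c) - N(a) = 1 = N(c') - N(a') and c = 0. If N(a') = N(a) and K(a',c') = K(a,c), then c' = 0 and F_{ac} and F_{a'c'} are equivalent under the subgroup of isometries of the form x ↦ λx with N(λ) = 1, via λ = a/a'. -/
/-- in the model `A` of `C₀(-q)`, for `F_{ac}`, `F_{a'c'}` with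
`N(c) - N(a) = 1 = N(c') - N(a')` and `c = 0`: if `N(a') = N(a)` and
`K(a',c') = K(a,c)` (with `K(a,c) = a³c + ā³c̄`), then `c' = 0` and `F_{ac}`
and `F_{a'c'}` are equivalent under the isometries `x ↦ λx` with `N(λ) = 1`,
via `λ = a/a'` (i.e. some `λ` of norm 1 with `λ·a' = a` and `c' = λ³c`). -/
theorem stmt_19 (𝕜 A : Type*) [Field 𝕜] (h2 : (2 : 𝕜) ≠ 0) (h3 : (3 : 𝕜) ≠ 0)
    [CommRing A] [Algebra 𝕜 A]
    (τ : A) (β : 𝕜) (hβ : β ≠ 0) (hτ : τ * τ = algebraMap 𝕜 A (-β))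
    (bA : Module.Basis (Fin 2) 𝕜 A) (hb0 : bA 0 = 1) (hb1 : bA 1 = τ)
    (conj : A ≃ₐ[𝕜] A) (hconjτ : conj τ = -τ)
    (a c a' c' : A)
    (hac : c * conj c - a * conj a = 1)
    (hac' : c' * conj c' - a' * conj a' = 1)
    (hc : c = 0)
    (hN : a' * conj a' = a * conj a)
    (hK : a' ^ 3 * c' + (conj a') ^ 3 * conj c' = a ^ 3 * c + (conj a) ^ 3 * conj c) :
    c' = 0 ∧
    ∃ l : A, l * conj l = 1 ∧ l * a' = a ∧ c' = l ^ 3 * c := by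
  subst hc
  -- coordinates
  have hcoord : ∀ z : A, z = algebraMap 𝕜 A (bA.repr z 0) + algebraMap 𝕜 A (bA.repr z 1) * τ := by
    intro z
    conv_lhs => rw [← bA.sum_repr z]
    rw [Fin.sum_univ_two, hb0, hb1, Algebra.smul_def, Algebra.smul_def, mul_one]
  have hconj : ∀ x y : 𝕜, conj (algebraMap 𝕜 A x + algebraMap 𝕜 A y * τ)
      = algebraMap 𝕜 A x - algebraMap 𝕜 A y * τ := by
    intro x y
    rw [map_add, map_mul, AlgEquiv.commutes, AlgEquiv.commutes, hconjτ]
    ring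
  have hlin : ∀ u v : 𝕜, algebraMap 𝕜 A u + algebraMap 𝕜 A v * τ = 0 → u = 0 ∧ v = 0 := by
    intro u v h
    have h' : u • bA 0 + v • bA 1 = 0 := by
      rw [hb0, hb1, Algebra.smul_def, Algebra.smul_def, mul_one]; exact h
    have h2' := Fintype.linearIndependent_iff.mp bA.linearIndependent ![u, v]
      (by simpa [Fin.sum_univ_two] using h')
    exact ⟨h2' 0, h2' 1⟩
  have hzero : ∀ z : A, z * z = 0 → z * conj z = 0 → z = 0 := by
    intro z h1 hz2
    have hzc := hcoord z
    rw [hzc] at h1 hz2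
    rw [hconj] at hz2
    have ex : algebraMap 𝕜 A (2 * (bA.repr z 0 * bA.repr z 0))
        + algebraMap 𝕜 A (2 * (bA.repr z 0 * bA.repr z 1)) * τ = 0 := by
      simp only [map_mul, map_ofNat]
      linear_combination h1 + hz2
    obtain ⟨ex1, _⟩ := hlin _ _ ex
    have hx0 : bA.repr z 0 = 0 :=
      mul_self_eq_zero.mp ((mul_eq_zero.mp ex1).resolve_left h2)
    have ey : algebraMap 𝕜 A (β * (bA.repr z 1 * bA.repr z 1)) + algebraMap 𝕜 A 0 * τ = 0 := by
      rw [hx0] at hz2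
      simp only [map_mul, map_zero, zero_mul, zero_add, zero_sub] at hz2 ⊢
      have hmb : algebraMap 𝕜 A β = - algebraMap 𝕜 A (-β) := by rw [map_neg, neg_neg]
      rw [hmb]
      linear_combination hz2 + (algebraMap 𝕜 A (bA.repr z 1) * algebraMap 𝕜 A (bA.repr z 1)) * hτ
    obtain ⟨ey1, _⟩ := hlin _ _ ey
    have hy0 : bA.repr z 1 = 0 :=
      mul_self_eq_zero.mp ((mul_eq_zero.mp ey1).resolve_left hβ)
    rw [hzc, hx0, hy0]
    simp
  have hcc : ∀ z : A, conj (conj z) = z := by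
    intro z
    have e1 : conj z = algebraMap 𝕜 A (bA.repr z 0) - algebraMap 𝕜 A (bA.repr z 1) * τ := by
      conv_lhs => rw [hcoord z]
      exact hconj _ _
    rw [e1, map_sub, map_mul, AlgEquiv.commutes, AlgEquiv.commutes, hconjτ]
    conv_rhs => rw [hcoord z]
    ring
  -- main argument
  have ha : a * conj a = -1 := by
    have h0 : conj (0 : A) = 0 := map_zero conj
    rw [h0] at hac
    linear_combination -hac
  have hN' : a' * conj a' = -1 := hN.trans ha
  have hcc' : c' * conj c' = 0 := by linear_combination hac' + hN'
  have hK0 : a' ^ 3 * c' + (conj a') ^ 3 * conj c' = 0 := by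
    have h0 : conj (0 : A) = 0 := map_zero conj
    rw [h0] at hK
    linear_combination hK
  have hsq : c' * c' = 0 := by
    linear_combination (-(conj a') ^ 3 * c') * hK0 + (conj a') ^ 6 * hcc'
      + (c' * c' * ((a' * conj a') ^ 2 - a' * conj a' + 1)) * hN'
  have hc'0 : c' = 0 := hzero c' hsq hcc'
  refine ⟨hc'0, -(a * conj a'), ?_, ?_, ?_⟩
  · have : conj (-(a * conj a')) = -(conj a * a') := by
      rw [map_neg, map_mul, hcc a']
    rw [this]
    linear_combination (a' * conj a') * ha + (-1 : A) * hN'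
  · linear_combination (-a) * hN'
  · rw [hc'0]; ring
end
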